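/- arXiv:1306.3334 — 2 statements merged into one kernel-verified Lean document; each statement's English description precedes it below -/
import Mathlib

section
/- Let q ≥ 1 be real, let ℓ ≥ 1 be an integer, and let L : ℕ → ℕ be a finitely supported function with total mass N = ∑_{n≥1} n·L_n ≥ 1. Then (1/(2N²))·∑_{m≥1} ∑_{n≥1} (m^q + n^q)·L_m·(L_n − 1[m=n])·Δ_{ℓ+1}(m,n) ≥ ℓ^{q−1}·G_ℓ·(1 − G_{ℓ+1}) − 2·ℓ^q/N, where G_r = (1/N)·∑_{n≥r} n·L_n. -/
/-- Total mass `N = ∑_{n ≥ 1} n · L_n` of a particle configuration `L`. -/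
noncomputable def totalMass (L : ℕ → ℕ) : ℝ :=
  ∑' n : ℕ, (n : ℝ) * (L n : ℝ)

/-- `G_r(L) = (1/N) ∑_{n ≥ r} n · L_n`, the fraction of mass in particles of size
at least `r`. -/
noncomputable def tailFrac (L : ℕ → ℕ) (r : ℕ) : ℝ :=
  (totalMass L)⁻¹ * ∑' n : ℕ, ((n : ℝ) + (r : ℝ)) * (L (n + r) : ℝ)

/-- `Δ_K(m,n) = (m+n)·1[m+n ≥ K] − m·1[m ≥ K] − n·1[n ≥ K]`, the change of the
test function `ψ(j) = j·1[j ≥ K]` when particles of sizes `m` and `n` merge. -/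
noncomputable def deltaMass (K m n : ℕ) : ℝ :=
  (if K ≤ m + n then ((m : ℝ) + (n : ℝ)) else 0)
    - (if K ≤ m then (m : ℝ) else 0) - (if K ≤ n then (n : ℝ) else 0)

lemma deltaMass_nonneg (K m n : ℕ) : 0 ≤ deltaMass K m n := by
  have hm : (0:ℝ) ≤ m := Nat.cast_nonneg m
  have hn : (0:ℝ) ≤ n := Nat.cast_nonneg n
  unfold deltaMass
  split_ifs <;> first | linarith | (exfalso; omega)

lemma deltaMass_comm (K m n : ℕ) : deltaMass K m n = deltaMass K n m := by
  unfold deltaMass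
  rw [add_comm m n, add_comm (m:ℝ) (n:ℝ)]
  ring

lemma deltaMass_ge (ℓ a b : ℕ) (ha : ℓ ≤ a) (hb1 : 1 ≤ b) (hb : b ≤ ℓ) :
    (b:ℝ) ≤ deltaMass (ℓ+1) a b := by
  have hA : (0:ℝ) ≤ a := Nat.cast_nonneg a
  unfold deltaMass
  rw [if_pos (by omega : ℓ + 1 ≤ a + b), if_neg (by omega : ¬ ℓ + 1 ≤ b)]
  by_cases h2 : ℓ + 1 ≤ a
  · rw [if_pos h2]; linarith
  · rw [if_neg h2]; linarith

noncomputable def gAux (q : ℝ) (ℓ : ℕ) (L : ℕ → ℕ) (a b : ℕ) : ℝ :=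
  ((a:ℝ)^q + (b:ℝ)^q) * (L a : ℝ) * ((L b : ℝ) - if a = b then 1 else 0)
    * deltaMass (ℓ+1) a b

lemma gAux_comm (q : ℝ) (ℓ : ℕ) (L : ℕ → ℕ) (a b : ℕ) :
    gAux q ℓ L a b = gAux q ℓ L b a := by
  rcases eq_or_ne a b with rfl | h
  · rfl
  · unfold gAux
    rw [if_neg h, if_neg (Ne.symm h), deltaMass_comm, sub_zero, sub_zero]
    ring

lemma gAux_nonneg (q : ℝ) (ℓ : ℕ) (L : ℕ → ℕ) (a b : ℕ) : 0 ≤ gAux q ℓ L a b := by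
  have hker : (0:ℝ) ≤ (a:ℝ)^q + (b:ℝ)^q := by positivity
  have hL : 0 ≤ (L a : ℝ) * ((L b : ℝ) - if a = b then 1 else 0) := by
    rcases eq_or_ne a b with rfl | h
    · rw [if_pos rfl]
      rcases Nat.eq_zero_or_pos (L a) with h0 | h0
      · simp [h0]
      · have h1 : (1:ℝ) ≤ (L a : ℝ) := by exact_mod_cast h0
        nlinarith
    · rw [if_neg h, sub_zero]
      positivity
  have h := mul_nonneg (mul_nonneg hker hL) (deltaMass_nonneg (ℓ+1) a b)
  unfold gAux
  nlinarith [h]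

lemma gAux_lower (q : ℝ) (hq : 1 ≤ q) (ℓ : ℕ) (hℓ : 1 ≤ ℓ) (L : ℕ → ℕ)
    (a b : ℕ) (ha : ℓ ≤ a) (hb1 : 1 ≤ b) (hb : b ≤ ℓ) (hab : a ≠ b) :
    (ℓ:ℝ)^(q-1) * ((a:ℝ) * L a * ((b:ℝ) * L b)) ≤ gAux q ℓ L a b := by
  have hA1 : (1:ℝ) ≤ a := by exact_mod_cast le_trans hℓ ha
  have hker : (ℓ:ℝ)^(q-1) * a ≤ (a:ℝ)^q + (b:ℝ)^q := by
    have h1 : (ℓ:ℝ)^(q-1) ≤ (a:ℝ)^(q-1) :=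
      Real.rpow_le_rpow (Nat.cast_nonneg ℓ) (by exact_mod_cast ha) (by linarith)
    have h2 : (a:ℝ)^(q-1) * (a:ℝ) = (a:ℝ)^q := by
      rw [← Real.rpow_add_one (by positivity : (a:ℝ) ≠ 0) (q-1), sub_add_cancel]
    have h3 : (0:ℝ) ≤ (b:ℝ)^q := by positivity
    nlinarith [mul_le_mul_of_nonneg_right h1 (by linarith : (0:ℝ) ≤ a)]
  have hd := deltaMass_ge ℓ a b ha hb1 hb
  have hLa : (0:ℝ) ≤ L a := Nat.cast_nonneg _
  have hLb : (0:ℝ) ≤ L b := Nat.cast_nonneg _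
  have hb0 : (0:ℝ) ≤ b := Nat.cast_nonneg b
  unfold gAux
  rw [if_neg hab, sub_zero]
  calc (ℓ:ℝ)^(q-1) * ((a:ℝ) * L a * ((b:ℝ) * L b))
      = ((ℓ:ℝ)^(q-1) * a) * (L a : ℝ) * (L b : ℝ) * b := by ring
    _ ≤ ((a:ℝ)^q + (b:ℝ)^q) * (L a : ℝ) * (L b : ℝ) * b := by
        apply mul_le_mul_of_nonneg_right _ hb0
        apply mul_le_mul_of_nonneg_right _ hLb
        exact mul_le_mul_of_nonneg_right hker hLa
    _ ≤ ((a:ℝ)^q + (b:ℝ)^q) * (L a : ℝ) * (L b : ℝ) * deltaMass (ℓ+1) a b := by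
        apply mul_le_mul_of_nonneg_left hd
        positivity

lemma gAux_diag (q : ℝ) (hq : 1 ≤ q) (ℓ : ℕ) (hℓ : 1 ≤ ℓ) (L : ℕ → ℕ) :
    2 * (ℓ:ℝ)^(q-1) * ((ℓ:ℝ) * L ℓ * ((ℓ:ℝ) * L ℓ) - (ℓ:ℝ) * ((ℓ:ℝ) * L ℓ)) ≤ gAux q ℓ L ℓ ℓ := by
  have hd : deltaMass (ℓ+1) ℓ ℓ = 2*(ℓ:ℝ) := by
    unfold deltaMass
    rw [if_pos (by omega : ℓ+1 ≤ ℓ+ℓ), if_neg (by omega : ¬ ℓ+1 ≤ ℓ)]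
    ring
  have hq' : (ℓ:ℝ)^q = (ℓ:ℝ)^(q-1) * ℓ := by
    have hℓ0 : (ℓ:ℝ) ≠ 0 := by positivity
    rw [← Real.rpow_add_one hℓ0 (q-1), sub_add_cancel]
  have hP : (0:ℝ) ≤ (ℓ:ℝ)^(q-1) := by positivity
  have hX : 0 ≤ (L ℓ:ℝ) * ((L ℓ:ℝ) - 1) := by
    rcases Nat.eq_zero_or_pos (L ℓ) with h0 | h0
    · simp [h0]
    · have : (1:ℝ) ≤ (L ℓ : ℝ) := by exact_mod_cast h0
      nlinarith
  unfold gAux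
  rw [if_pos rfl, hd, hq']
  nlinarith [mul_nonneg (mul_nonneg hP (mul_self_nonneg ((ℓ:ℝ)))) hX]


/-- Generator lower bound for the kernel `m^q + n^q`: the action of the
Marcus–Lushnikov generator on the tail mass `G_{ℓ+1}` is at least
`ℓ^{q−1} G_ℓ (1 − G_{ℓ+1}) − 2 ℓ^q / N`. -/
theorem generator_tail_mass_lower_bound
    (q : ℝ) (hq : 1 ≤ q) (ℓ : ℕ) (hℓ : 1 ≤ ℓ)
    (L : ℕ → ℕ) (hLfin : (Function.support L).Finite)
    (hN : 1 ≤ totalMass L) :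
    (ℓ : ℝ) ^ (q - 1) * tailFrac L ℓ * (1 - tailFrac L (ℓ + 1))
        - 2 * (ℓ : ℝ) ^ q / totalMass L
      ≤ (1 / (2 * totalMass L ^ 2)) *
          ∑' (m : ℕ) (n : ℕ),
            (((m : ℝ) + 1) ^ q + ((n : ℝ) + 1) ^ q) * (L (m + 1) : ℝ)
              * ((L (n + 1) : ℝ) - if m = n then 1 else 0)
              * deltaMass (ℓ + 1) (m + 1) (n + 1) := by
  classical
  obtain ⟨M, hMℓ, hLM⟩ : ∃ M : ℕ, ℓ + 1 < M ∧ ∀ n, M ≤ n → L n = 0 := by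
    obtain ⟨B, hB⟩ := hLfin.bddAbove
    refine ⟨B + ℓ + 2, by omega, fun n hn => ?_⟩
    by_contra h
    have := hB (Function.mem_support.mpr h)
    omega
  have hN0 : (0:ℝ) < totalMass L := lt_of_lt_of_le one_pos hN
  -- vanishing of gAux outside the support box
  have hgz : ∀ a b : ℕ, M ≤ a ∨ M ≤ b → gAux q ℓ L a b = 0 := by
    intro a b hab
    rcases hab with h | h
    · simp [gAux, hLM a h]
    · rcases eq_or_ne a b with rfl | hne
      · simp [gAux, hLM a h]
      · simp [gAux, hLM b h, hne]
  -- summand equals gAux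
  have hFg : ∀ m n : ℕ,
      (((m:ℝ)+1)^q + ((n:ℝ)+1)^q) * (L (m+1) : ℝ)
        * ((L (n+1) : ℝ) - if m = n then 1 else 0) * deltaMass (ℓ+1) (m+1) (n+1)
      = gAux q ℓ L (m+1) (n+1) := by
    intro m n
    have h : (m + 1 = n + 1) ↔ (m = n) := by omega
    simp only [gAux, Nat.cast_add, Nat.cast_one, h]
  -- the double tsum as a finite double sum
  have hSfin : (∑' (m : ℕ) (n : ℕ),
        (((m:ℝ)+1)^q + ((n:ℝ)+1)^q) * (L (m+1):ℝ)
          * ((L (n+1):ℝ) - if m = n then 1 else 0) * deltaMass (ℓ+1) (m+1) (n+1))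
      = ∑ a ∈ Finset.Ico 1 (M+1), ∑ b ∈ Finset.Ico 1 (M+1), gAux q ℓ L a b := by
    have h1 : ∀ m : ℕ, (∑' n : ℕ,
        (((m:ℝ)+1)^q + ((n:ℝ)+1)^q) * (L (m+1):ℝ)
          * ((L (n+1):ℝ) - if m = n then 1 else 0) * deltaMass (ℓ+1) (m+1) (n+1))
        = ∑ n ∈ Finset.range M, gAux q ℓ L (m+1) (n+1) := by
      intro m
      rw [tsum_congr (fun n => hFg m n)]
      refine tsum_eq_sum ?_
      intro n hn
      simp only [Finset.mem_range, not_lt] at hn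
      exact hgz _ _ (Or.inr (by omega))
    rw [tsum_congr h1, tsum_eq_sum (s := Finset.range M) (by
      intro m hm
      simp only [Finset.mem_range, not_lt] at hm
      exact Finset.sum_eq_zero fun n _ => hgz _ _ (Or.inl (by omega)))]
    rw [Finset.sum_Ico_eq_sum_range]
    have hMM : M + 1 - 1 = M := by omega
    rw [hMM]
    refine Finset.sum_congr rfl fun m _ => ?_
    rw [Finset.sum_Ico_eq_sum_range, hMM]
    refine Finset.sum_congr rfl fun n _ => ?_
    rw [add_comm 1 m, add_comm 1 n]

  -- the two regions
  set F1 : Finset (ℕ × ℕ) := (Finset.Ico ℓ (M+1)) ×ˢ (Finset.Ico 1 (ℓ+1)) with hF1def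
  set F2 : Finset (ℕ × ℕ) := (Finset.Ico 1 (ℓ+1)) ×ˢ (Finset.Ico ℓ (M+1)) with hF2def
  have hmemF1 : (ℓ, ℓ) ∈ F1 := by
    simp only [hF1def, Finset.mem_product, Finset.mem_Ico]
    omega
  have hSfin_ge : ∑ p ∈ F1 ∪ F2, gAux q ℓ L p.1 p.2
      ≤ ∑ a ∈ Finset.Ico 1 (M+1), ∑ b ∈ Finset.Ico 1 (M+1), gAux q ℓ L a b := by
    rw [← Finset.sum_product']
    refine Finset.sum_le_sum_of_subset_of_nonneg ?_ (fun p _ _ => gAux_nonneg q ℓ L p.1 p.2)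
    apply Finset.union_subset <;>
      exact Finset.product_subset_product
        (Finset.Ico_subset_Ico (by omega) (by omega))
        (Finset.Ico_subset_Ico (by omega) (by omega))
  have hinter : F1 ∩ F2 = {(ℓ, ℓ)} := by
    ext p
    simp only [hF1def, hF2def, Finset.mem_inter, Finset.mem_product, Finset.mem_Ico,
      Finset.mem_singleton, Prod.ext_iff]
    omega
  have hF2eq : ∑ p ∈ F2, gAux q ℓ L p.1 p.2 = ∑ p ∈ F1, gAux q ℓ L p.1 p.2 := by
    refine Finset.sum_equiv (Equiv.prodComm ℕ ℕ) ?_ ?_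
    · intro p
      simp only [hF1def, hF2def, Finset.mem_product, Equiv.prodComm_apply, Prod.fst_swap,
        Prod.snd_swap]
      tauto
    · intro p _
      exact gAux_comm q ℓ L p.1 p.2
  have hunion : ∑ p ∈ F1 ∪ F2, gAux q ℓ L p.1 p.2
      = 2 * (∑ p ∈ F1, gAux q ℓ L p.1 p.2) - gAux q ℓ L ℓ ℓ := by
    have h := Finset.sum_union_inter (s₁ := F1) (s₂ := F2) (f := fun p : ℕ × ℕ => gAux q ℓ L p.1 p.2)
    rw [hinter, Finset.sum_singleton] at h
    rw [hF2eq] at h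
    simp only at h
    linarith
  -- pointwise lower bound on the erased region
  have herase : (ℓ:ℝ)^(q-1) * ((∑ p ∈ F1, (p.1:ℝ) * L p.1 * ((p.2:ℝ) * L p.2))
        - (ℓ:ℝ) * L ℓ * ((ℓ:ℝ) * L ℓ))
      ≤ (∑ p ∈ F1, gAux q ℓ L p.1 p.2) - gAux q ℓ L ℓ ℓ := by
    have hsum : ∑ p ∈ F1.erase (ℓ,ℓ), (ℓ:ℝ)^(q-1) * ((p.1:ℝ) * L p.1 * ((p.2:ℝ) * L p.2))
        ≤ ∑ p ∈ F1.erase (ℓ,ℓ), gAux q ℓ L p.1 p.2 := by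
      refine Finset.sum_le_sum ?_
      rintro ⟨a, b⟩ hp
      rw [Finset.mem_erase] at hp
      obtain ⟨hne, hp⟩ := hp
      rw [hF1def, Finset.mem_product, Finset.mem_Ico, Finset.mem_Ico] at hp
      have hne' : ¬(a = ℓ ∧ b = ℓ) := by
        rintro ⟨h1, h2⟩
        exact hne (by rw [h1, h2])
      exact gAux_lower q hq ℓ hℓ L a b hp.1.1 hp.2.1 (by omega) (by omega)
    have e1 : ∑ p ∈ F1.erase (ℓ,ℓ), (ℓ:ℝ)^(q-1) * ((p.1:ℝ) * L p.1 * ((p.2:ℝ) * L p.2))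
        = (ℓ:ℝ)^(q-1) * ((∑ p ∈ F1, (p.1:ℝ) * L p.1 * ((p.2:ℝ) * L p.2))
            - (ℓ:ℝ) * L ℓ * ((ℓ:ℝ) * L ℓ)) := by
      rw [← Finset.mul_sum, Finset.sum_erase_eq_sub hmemF1]
    have e2 : ∑ p ∈ F1.erase (ℓ,ℓ), gAux q ℓ L p.1 p.2
        = (∑ p ∈ F1, gAux q ℓ L p.1 p.2) - gAux q ℓ L ℓ ℓ :=
      Finset.sum_erase_eq_sub hmemF1
    rw [e1, e2] at hsum
    exact hsum
  have hfact : ∑ p ∈ F1, (p.1:ℝ) * L p.1 * ((p.2:ℝ) * L p.2)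
      = (∑ a ∈ Finset.Ico ℓ (M+1), (a:ℝ) * L a) * (∑ b ∈ Finset.Ico 1 (ℓ+1), (b:ℝ) * L b) := by
    rw [hF1def, Finset.sum_mul_sum, Finset.sum_product]
  -- the finite expressions for totalMass and the tails
  have hNsum : totalMass L = ∑ k ∈ Finset.Ico 1 (M+1), (k:ℝ) * L k := by
    rw [totalMass]
    refine tsum_eq_sum ?_
    intro n hn
    rw [Finset.mem_Ico, not_and_or, not_le, not_lt] at hn
    rcases hn with h | h
    · have : n = 0 := by omega
      subst this; simp
    · rw [hLM n (by omega)]; simp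
  have htail : ∀ r : ℕ, 1 ≤ r → r ≤ M →
      (∑' n : ℕ, ((n:ℝ) + (r:ℝ)) * (L (n + r) : ℝ)) = ∑ k ∈ Finset.Ico r (M+1), (k:ℝ) * L k := by
    intro r hr1 hrM
    have h1 : (∑' n : ℕ, ((n:ℝ) + (r:ℝ)) * (L (n + r) : ℝ))
        = ∑ n ∈ Finset.range M, ((n:ℝ) + (r:ℝ)) * (L (n + r) : ℝ) := by
      refine tsum_eq_sum ?_
      intro n hn
      simp only [Finset.mem_range, not_lt] at hn
      rw [hLM (n + r) (by omega)]
      simp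
    rw [h1]
    have h2 : ∑ k ∈ Finset.Ico r (r+M), (k:ℝ) * L k
        = ∑ n ∈ Finset.range M, ((n:ℝ) + (r:ℝ)) * (L (n + r) : ℝ) := by
      rw [Finset.sum_Ico_eq_sum_range]
      have hMM : r + M - r = M := by omega
      rw [hMM]
      refine Finset.sum_congr rfl fun n _ => ?_
      rw [add_comm r n]
      push_cast
      ring
    rw [← h2, ← Finset.sum_Ico_consecutive (fun k => (k:ℝ)*L k)
      (by omega : r ≤ M+1) (by omega : M+1 ≤ r+M)]
    have h3 : ∑ k ∈ Finset.Ico (M+1) (r+M), (k:ℝ) * L k = 0 :=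
      Finset.sum_eq_zero fun k hk => by
        rw [Finset.mem_Ico] at hk
        rw [hLM k (by omega)]; simp
    rw [h3, add_zero]
  have hTl : tailFrac L ℓ = (totalMass L)⁻¹ * ∑ k ∈ Finset.Ico ℓ (M+1), (k:ℝ) * L k := by
    rw [tailFrac, htail ℓ hℓ (by omega)]
  have hTl1 : tailFrac L (ℓ+1)
      = (totalMass L)⁻¹ * ∑ k ∈ Finset.Ico (ℓ+1) (M+1), (k:ℝ) * L k := by
    rw [tailFrac, htail (ℓ+1) (by omega) (by omega)]
  have hsplit : ∑ k ∈ Finset.Ico 1 (M+1), (k:ℝ) * L k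
      = (∑ k ∈ Finset.Ico 1 (ℓ+1), (k:ℝ) * L k)
        + ∑ k ∈ Finset.Ico (ℓ+1) (M+1), (k:ℝ) * L k :=
    (Finset.sum_Ico_consecutive _ (by omega) (by omega)).symm
  have hsingle : (ℓ:ℝ) * L ℓ ≤ ∑ k ∈ Finset.Ico ℓ (M+1), (k:ℝ) * L k := by
    refine Finset.single_le_sum (f := fun k : ℕ => (k:ℝ) * (L k : ℝ)) (fun i _ => by positivity) ?_
    rw [Finset.mem_Ico]; omega
  have hxN : (∑ k ∈ Finset.Ico ℓ (M+1), (k:ℝ) * L k)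
      ≤ ∑ k ∈ Finset.Ico 1 (M+1), (k:ℝ) * L k := by
    refine Finset.sum_le_sum_of_subset_of_nonneg
      (Finset.Ico_subset_Ico (by omega) (by omega)) (fun i _ _ => by positivity)
  -- abbreviations
  set P := (ℓ:ℝ)^(q-1) with hPdef
  set x := ∑ k ∈ Finset.Ico ℓ (M+1), (k:ℝ) * L k with hxdef
  set y := ∑ k ∈ Finset.Ico (ℓ+1) (M+1), (k:ℝ) * L k with hydef
  set Bs := ∑ k ∈ Finset.Ico 1 (ℓ+1), (k:ℝ) * L k with hBsdef
  set N := totalMass L with hNdef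
  have hP0 : (0:ℝ) ≤ P := by rw [hPdef]; positivity
  have hq' : (ℓ:ℝ)^q = P * ℓ := by
    rw [hPdef, ← Real.rpow_add_one (by positivity : (ℓ:ℝ) ≠ 0) (q-1), sub_add_cancel]
  have hBsN : Bs = N - y := by
    rw [hNsum, hsplit]; ring
  have hcN : (ℓ:ℝ) * L ℓ ≤ N := by
    rw [hNsum]
    linarith [hsingle, hxN]
  -- the key finite inequality
  have hdiag := gAux_diag q hq ℓ hℓ L
  rw [← hPdef] at hdiag
  have key : 2 * P * (x * (N - y)) - 2 * P * ((ℓ:ℝ) * ((ℓ:ℝ) * L ℓ))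
      ≤ ∑ a ∈ Finset.Ico 1 (M+1), ∑ b ∈ Finset.Ico 1 (M+1), gAux q ℓ L a b := by
    rw [hfact, hBsN] at herase
    linarith [herase, hdiag, hunion, hSfin_ge]
  -- final algebra
  rw [hTl, hTl1, hSfin, hq']
  have hNne : N ≠ 0 := ne_of_gt hN0
  have step1 : P * (N⁻¹ * x) * (1 - N⁻¹ * y) = P * x * (N - y) / N^2 := by
    rw [div_eq_mul_inv, pow_two, mul_inv]
    have h : (1:ℝ) - N⁻¹ * y = N⁻¹ * (N - y) := by
      rw [mul_sub, inv_mul_cancel₀ hNne]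
    rw [h]; ring
  have step2 : 1/(2*N^2) * (2 * P * (x * (N - y)) - 2 * P * ((ℓ:ℝ) * ((ℓ:ℝ) * L ℓ)))
      = P * x * (N - y) / N^2 - P * ℓ * ((ℓ:ℝ) * L ℓ) / N^2 := by
    field_simp
  have step3 : P * ℓ * ((ℓ:ℝ) * L ℓ) / N^2 ≤ 2 * (P * ℓ) / N := by
    rw [div_le_div_iff₀ (pow_pos hN0 2) hN0]
    have hu : (0:ℝ) ≤ P * ℓ * N :=
      mul_nonneg (mul_nonneg hP0 (Nat.cast_nonneg ℓ)) hN0.le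
    nlinarith [mul_nonneg hu (by linarith : (0:ℝ) ≤ 2 * N - (ℓ:ℝ) * L ℓ)]
  have step4 : 1/(2*N^2) * (2 * P * (x * (N - y)) - 2 * P * ((ℓ:ℝ) * ((ℓ:ℝ) * L ℓ)))
      ≤ 1/(2*N^2) * ∑ a ∈ Finset.Ico 1 (M+1), ∑ b ∈ Finset.Ico 1 (M+1), gAux q ℓ L a b :=
    mul_le_mul_of_nonneg_left key (by
      apply le_of_lt
      apply div_pos one_pos
      have := pow_pos hN0 2
      linarith)
  rw [step2] at step4
  linarith [step1, step3, step4]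
end

section
/- Let q ≥ 1 and p ≥ 2 be reals, let ℓ ≥ 1 be an integer, and let L : ℕ → ℕ be a finitely supported function with total mass N = ∑_{n≥1} n·L_n ≥ 1. Then (1/(2N²))·∑_{m≥1} ∑_{n≥1} (m^q + n^q)·L_m·(L_n − 1[m=n])·[ (m+n)^p·1[m+n ≥ ℓ+1] − m^p·1[m ≥ ℓ+1] − n^p·1[n ≥ ℓ+1] ] ≥ p·( (1/N)·∑_{n≥ℓ} n^{p+q−1}·L_n )·( (1/N)·∑_{m=1}^{ℓ−1} m·L_m ). -/
open Real

/-- `Δ^p_K(m,n) = (m+n)^p·1[m+n ≥ K] − m^p·1[m ≥ K] − n^p·1[n ≥ K]`, the change of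
the test function `ψ(j) = j^p·1[j ≥ K]` when particles of sizes `m` and `n` merge. -/
noncomputable def deltaPow (p : ℝ) (K m n : ℕ) : ℝ :=
  (if K ≤ m + n then ((m : ℝ) + (n : ℝ)) ^ p else 0)
    - (if K ≤ m then (m : ℝ) ^ p else 0) - (if K ≤ n then (n : ℝ) ^ p else 0)

lemma rpow_superadd {a b p : ℝ} (ha : 0 ≤ a) (hb : 0 ≤ b) (hp : 1 ≤ p) :
    a ^ p + b ^ p ≤ (a + b) ^ p := by
  have := NNReal.add_rpow_le_rpow_add (⟨a, ha⟩ : NNReal) ⟨b, hb⟩ hp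
  exact_mod_cast this

lemma rpow_tangent {p : ℝ} (hp : 1 ≤ p) {x y : ℝ} (hx : 1 ≤ x) (hy : 0 ≤ y) :
    x ^ p + p * x ^ (p - 1) * y ≤ (x + y) ^ p := by
  have hx0 : (0:ℝ) < x := lt_of_lt_of_le one_pos hx
  have hz : (-1:ℝ) ≤ y / x := le_trans (by norm_num) (div_nonneg hy hx0.le)
  have hb := one_add_mul_self_le_rpow_one_add hz hp
  have h1 : (1 + y / x) = (x + y) / x := by field_simp
  rw [h1, Real.div_rpow (by linarith) hx0.le] at hb
  have hxp : (0:ℝ) < x ^ p := Real.rpow_pos_of_pos hx0 p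
  have h2 : x ^ (p - 1) = x ^ p / x := by
    rw [Real.rpow_sub hx0, Real.rpow_one]
  have h3 := mul_le_mul_of_nonneg_right hb hxp.le
  rw [div_mul_cancel₀ _ (ne_of_gt hxp)] at h3
  calc x ^ p + p * x ^ (p - 1) * y = (1 + p * (y / x)) * x ^ p := by
        rw [h2]; field_simp
    _ ≤ (x + y) ^ p := h3

lemma deltaPow_nonneg {p : ℝ} (hp : 1 ≤ p) (K m n : ℕ) : 0 ≤ deltaPow p K m n := by
  unfold deltaPow
  have hm : (0:ℝ) ≤ (m:ℝ) := Nat.cast_nonneg m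
  have hn : (0:ℝ) ≤ (n:ℝ) := Nat.cast_nonneg n
  have hmono : ∀ a b : ℝ, 0 ≤ a → a ≤ b → a ^ p ≤ b ^ p := fun a b ha hab =>
    Real.rpow_le_rpow ha hab (by linarith)
  split_ifs with h1 h2 h3 h2' h3' h3'' h3'''
  · have := rpow_superadd hm hn hp; linarith
  · have := hmono (m:ℝ) ((m:ℝ)+(n:ℝ)) hm (by linarith); linarith
  · have := hmono (n:ℝ) ((m:ℝ)+(n:ℝ)) hn (by linarith); linarith
  · have := Real.rpow_nonneg (by linarith : (0:ℝ) ≤ (m:ℝ)+(n:ℝ)) p; linarith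
  · omega
  · omega
  · omega
  · linarith

lemma deltaPow_comm (p : ℝ) (K m n : ℕ) : deltaPow p K m n = deltaPow p K n m := by
  unfold deltaPow
  rw [Nat.add_comm n m, add_comm (n:ℝ) (m:ℝ)]
  ring

lemma deltaPow_lower {p : ℝ} (hp : 1 ≤ p) {ℓ a b : ℕ} (ha : ℓ ≤ a) (hb1 : 1 ≤ b) (hb2 : b < ℓ) :
    p * (a:ℝ) ^ (p - 1) * (b:ℝ) ≤ deltaPow p (ℓ+1) a b := by
  unfold deltaPow
  have hbif : ¬ (ℓ + 1 ≤ b) := by omega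
  have hmn : ℓ + 1 ≤ a + b := by omega
  rw [if_pos hmn, if_neg hbif]
  have hx1 : (1:ℝ) ≤ (a:ℝ) := by exact_mod_cast (by omega : 1 ≤ a)
  have key := rpow_tangent hp hx1 (Nat.cast_nonneg b : (0:ℝ) ≤ (b:ℝ))
  by_cases hA : ℓ + 1 ≤ a
  · rw [if_pos hA]; linarith
  · rw [if_neg hA]
    have := Real.rpow_nonneg (by linarith : (0:ℝ) ≤ (a:ℝ)) p
    linarith

/-- The generator summand. -/
noncomputable def genTerm (q p : ℝ) (K : ℕ) (L : ℕ → ℕ) (m n : ℕ) : ℝ :=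
  (((m : ℝ) + 1) ^ q + ((n : ℝ) + 1) ^ q) * (L (m + 1) : ℝ)
    * ((L (n + 1) : ℝ) - if m = n then 1 else 0)
    * deltaPow p K (m + 1) (n + 1)

lemma genTerm_nonneg {q p : ℝ} (hp : 1 ≤ p) (K : ℕ) (L : ℕ → ℕ) (m n : ℕ) :
    0 ≤ genTerm q p K L m n := by
  unfold genTerm
  have hΔ := deltaPow_nonneg hp K (m+1) (n+1)
  have hker : (0:ℝ) ≤ ((m:ℝ)+1)^q + ((n:ℝ)+1)^q := by positivity
  rcases eq_or_ne m n with rfl | hne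
  · rw [if_pos rfl]
    have hLL : (0:ℝ) ≤ (L (m+1):ℝ) * ((L (m+1):ℝ) - 1) := by
      rcases Nat.eq_zero_or_pos (L (m+1)) with h0 | h1
      · simp [h0]
      · have h2 : (1:ℝ) ≤ (L (m+1):ℝ) := by exact_mod_cast h1
        nlinarith
    have heq : (((m:ℝ)+1)^q + ((m:ℝ)+1)^q) * (L (m+1):ℝ) * ((L (m+1):ℝ) - 1)
          * deltaPow p K (m+1) (m+1)
        = ((((m:ℝ)+1)^q + ((m:ℝ)+1)^q) * ((L (m+1):ℝ) * ((L (m+1):ℝ) - 1)))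
          * deltaPow p K (m+1) (m+1) := by ring
    rw [heq]
    exact mul_nonneg (mul_nonneg hker hLL) hΔ
  · simp only [if_neg hne, sub_zero]
    exact mul_nonneg (mul_nonneg (mul_nonneg hker (Nat.cast_nonneg _)) (Nat.cast_nonneg _)) hΔ

lemma genTerm_symm (q p : ℝ) (K : ℕ) (L : ℕ → ℕ) {m n : ℕ} (h : m ≠ n) :
    genTerm q p K L n m = genTerm q p K L m n := by
  unfold genTerm
  rw [if_neg h, if_neg h.symm, deltaPow_comm]
  ring

lemma genTerm_key {q p : ℝ} (hp : 2 ≤ p) {c : ℕ} (L : ℕ → ℕ) {m n : ℕ}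
    (hbig : c ≤ m) (hsmall : n < c) :
    p * (((m:ℝ)+1) ^ (p + q - 1) * (L (m+1) : ℝ)) * (((n:ℝ)+1) * (L (n+1) : ℝ))
      ≤ genTerm q p (c+1+1) L m n := by
  have hp1 : (1:ℝ) ≤ p := by linarith
  have hne : m ≠ n := by omega
  unfold genTerm
  rw [if_neg hne, sub_zero]
  have hΔ : p * ((m+1:ℕ):ℝ) ^ (p - 1) * ((n+1:ℕ):ℝ) ≤ deltaPow p (c+1+1) (m+1) (n+1) :=
    deltaPow_lower hp1 (by omega : c+1 ≤ m+1) (by omega : 1 ≤ n+1) (by omega : n+1 < c+1)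
  have hcast1 : ((m+1:ℕ):ℝ) = (m:ℝ)+1 := by push_cast; ring
  have hcast2 : ((n+1:ℕ):ℝ) = (n:ℝ)+1 := by push_cast; ring
  rw [hcast1, hcast2] at hΔ
  have hx0 : (0:ℝ) < (m:ℝ)+1 := by positivity
  have hsplit : ((m:ℝ)+1) ^ (p+q-1) = ((m:ℝ)+1) ^ q * ((m:ℝ)+1) ^ (p-1) := by
    rw [← Real.rpow_add hx0]; ring_nf
  have hT0 : (0:ℝ) ≤ p * ((m:ℝ)+1) ^ (p-1) * ((n:ℝ)+1) := by positivity
  have hΔ0 : 0 ≤ deltaPow p (c+1+1) (m+1) (n+1) := le_trans hT0 hΔ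
  have hq0 : (0:ℝ) ≤ ((m:ℝ)+1)^q := Real.rpow_nonneg (by positivity) q
  have hbq0 : (0:ℝ) ≤ ((n:ℝ)+1)^q := Real.rpow_nonneg (by positivity) q
  have hLa : (0:ℝ) ≤ (L (m+1):ℝ) := Nat.cast_nonneg _
  have hLb : (0:ℝ) ≤ (L (n+1):ℝ) := Nat.cast_nonneg _
  calc p * (((m:ℝ)+1) ^ (p + q - 1) * (L (m+1) : ℝ)) * (((n:ℝ)+1) * (L (n+1) : ℝ))
      = (((m:ℝ)+1)^q * (L (m+1):ℝ) * (L (n+1):ℝ)) * (p * ((m:ℝ)+1) ^ (p-1) * ((n:ℝ)+1)) := by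
        rw [hsplit]; ring
    _ ≤ (((m:ℝ)+1)^q * (L (m+1):ℝ) * (L (n+1):ℝ)) * deltaPow p (c+1+1) (m+1) (n+1) := by
        apply mul_le_mul_of_nonneg_left hΔ; positivity
    _ ≤ ((((m:ℝ)+1)^q + ((n:ℝ)+1)^q) * (L (m+1):ℝ) * (L (n+1):ℝ))
          * deltaPow p (c+1+1) (m+1) (n+1) := by
        apply mul_le_mul_of_nonneg_right _ hΔ0
        have : (0:ℝ) ≤ ((n:ℝ)+1)^q * (L (m+1):ℝ) * (L (n+1):ℝ) := by positivity
        nlinarith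
    _ = (((m:ℝ)+1)^q + ((n:ℝ)+1)^q) * (L (m+1):ℝ) * (L (n+1):ℝ)
          * deltaPow p (c+1+1) (m+1) (n+1) := by ring

/-- Generator lower bound for the truncated `p`-th moment with kernel `m^q + n^q`:
the action of the Marcus–Lushnikov generator on `M_{p,ℓ+1}` is at least
`p · ((1/N) ∑_{n ≥ ℓ} n^{p+q−1} L_n) · ((1/N) ∑_{m=1}^{ℓ−1} m L_m)`. -/
theorem generator_moment_lower_bound
    (q p : ℝ) (hq : 1 ≤ q) (hp : 2 ≤ p) (ℓ : ℕ) (hℓ : 1 ≤ ℓ)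
    (L : ℕ → ℕ) (hLfin : (Function.support L).Finite)
    (hN : 1 ≤ totalMass L) :
    p * ((totalMass L)⁻¹ * ∑' n : ℕ, ((n : ℝ) + (ℓ : ℝ)) ^ (p + q - 1) * (L (n + ℓ) : ℝ))
        * ((totalMass L)⁻¹ * ∑ m ∈ Finset.Ico 1 ℓ, (m : ℝ) * (L m : ℝ))
      ≤ (1 / (2 * totalMass L ^ 2)) *
          ∑' (m : ℕ) (n : ℕ),
            (((m : ℝ) + 1) ^ q + ((n : ℝ) + 1) ^ q) * (L (m + 1) : ℝ)
              * ((L (n + 1) : ℝ) - if m = n then 1 else 0)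
              * deltaPow p (ℓ + 1) (m + 1) (n + 1) := by
  classical
  obtain ⟨c, rfl⟩ : ∃ c, ℓ = c + 1 := ⟨ℓ - 1, by omega⟩
  have hp1 : (1:ℝ) ≤ p := by linarith
  have hN0 : (0:ℝ) < totalMass L := lt_of_lt_of_le one_pos hN
  set B : ℕ := max (hLfin.toFinset.sup id + 1) (c + 1) with hBdef
  have hB : ∀ n, B ≤ n → L n = 0 := by
    intro n hn
    by_contra h
    have h1 : n ∈ hLfin.toFinset := hLfin.mem_toFinset.mpr h
    have h2 : n ≤ hLfin.toFinset.sup id := Finset.le_sup (f := id) h1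
    have h3 := le_max_left (hLfin.toFinset.sup id + 1) (c + 1)
    omega
  have hcB : c + 1 ≤ B := le_max_right _ _
  set R := Finset.range B with hRdef
  -- rewrite the double tsum as a finite double sum of genTerm
  have hD : (∑' (m : ℕ) (n : ℕ),
        (((m : ℝ) + 1) ^ q + ((n : ℝ) + 1) ^ q) * (L (m + 1) : ℝ)
          * ((L (n + 1) : ℝ) - if m = n then 1 else 0)
          * deltaPow p (c + 1 + 1) (m + 1) (n + 1))
      = ∑ m ∈ R, ∑ n ∈ R, genTerm q p (c+1+1) L m n := by
    have h0 : (∑' (m : ℕ) (n : ℕ),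
        (((m : ℝ) + 1) ^ q + ((n : ℝ) + 1) ^ q) * (L (m + 1) : ℝ)
          * ((L (n + 1) : ℝ) - if m = n then 1 else 0)
          * deltaPow p (c + 1 + 1) (m + 1) (n + 1))
        = ∑' (m : ℕ) (n : ℕ), genTerm q p (c+1+1) L m n := rfl
    rw [h0]
    have h1 : ∀ m : ℕ, (∑' n : ℕ, genTerm q p (c+1+1) L m n)
        = ∑ n ∈ R, genTerm q p (c+1+1) L m n := by
      intro m
      refine tsum_eq_sum fun n hn => ?_
      have hn' : B ≤ n := by simpa [hRdef] using hn
      have hL : L (n+1) = 0 := hB _ (by omega)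
      rcases eq_or_ne m n with rfl | hne
      · simp [genTerm, hL]
      · simp [genTerm, hL, hne]
    rw [tsum_congr h1]
    refine tsum_eq_sum fun m hm => ?_
    have hm' : B ≤ m := by simpa [hRdef] using hm
    have hL : L (m+1) = 0 := hB _ (by omega)
    exact Finset.sum_eq_zero fun n _ => by simp [genTerm, hL]
  -- rewrite the single tsum
  have hA : (∑' n : ℕ, ((n : ℝ) + ((c+1 : ℕ) : ℝ)) ^ (p + q - 1) * (L (n + (c+1)) : ℝ))
      = ∑ n ∈ R, ((n : ℝ) + ((c+1 : ℕ) : ℝ)) ^ (p + q - 1) * (L (n + (c+1)) : ℝ) := by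
    refine tsum_eq_sum fun n hn => ?_
    have hn' : B ≤ n := by simpa [hRdef] using hn
    have hL : L (n + (c+1)) = 0 := hB _ (by omega)
    simp [hL]
  -- the two factor sums
  set bigf : ℕ → ℝ := fun m => if c ≤ m then ((m:ℝ)+1)^(p+q-1) * (L (m+1):ℝ) else 0 with hbigf
  set smallf : ℕ → ℝ := fun n => if n < c then ((n:ℝ)+1) * (L (n+1):ℝ) else 0 with hsmallf
  -- reindexing: bigf sum equals the tsum's finite sum
  have hApos : ∀ n ∈ R, (0:ℝ) ≤ ((n : ℝ) + ((c+1:ℕ) : ℝ)) ^ (p + q - 1) * (L (n + (c+1)) : ℝ) :=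
    fun n _ => mul_nonneg (Real.rpow_nonneg (by positivity) _) (Nat.cast_nonneg _)
  have hreidx1 : (∑ n ∈ R, ((n : ℝ) + ((c+1:ℕ) : ℝ)) ^ (p + q - 1) * (L (n + (c+1)) : ℝ))
      = ∑ m ∈ R, bigf m := by
    have e1 : (∑ m ∈ R, bigf m)
        = ∑ m ∈ Finset.Ico c B, ((m:ℝ)+1)^(p+q-1) * (L (m+1):ℝ) := by
      rw [hRdef, ← Finset.sum_filter]
      congr 1
      ext x
      simp only [Finset.mem_filter, Finset.mem_range, Finset.mem_Ico]
      omega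
    have e2 : (∑ m ∈ Finset.Ico c B, ((m:ℝ)+1)^(p+q-1) * (L (m+1):ℝ))
        = ∑ i ∈ Finset.range (B - c), (((c+i:ℕ):ℝ)+1)^(p+q-1) * (L ((c+i)+1):ℝ) := by
      rw [Finset.sum_Ico_eq_sum_range]
    have e3 : (∑ n ∈ R, ((n : ℝ) + ((c+1:ℕ) : ℝ)) ^ (p + q - 1) * (L (n + (c+1)) : ℝ))
        = ∑ n ∈ Finset.range (B - c), ((n : ℝ) + ((c+1:ℕ) : ℝ)) ^ (p + q - 1) * (L (n + (c+1)) : ℝ) := by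
      rw [hRdef]
      refine (Finset.sum_subset (Finset.range_subset_range.mpr (by omega)) fun n _ hn => ?_).symm
      have hn' : B - c ≤ n := by simpa using hn
      have hL : L (n + (c+1)) = 0 := hB _ (by omega)
      simp [hL]
    rw [e1, e2, e3]
    refine Finset.sum_congr rfl fun i _ => ?_
    have harg : i + (c+1) = (c+i)+1 := by omega
    rw [harg]
    congr 1
    push_cast
    ring
  -- reindexing: smallf sum equals the Ico sum
  have hreidx2 : (∑ n ∈ R, smallf n)
      = ∑ m ∈ Finset.Ico 1 (c+1), (m:ℝ) * (L m : ℝ) := by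
    have e1 : (∑ n ∈ R, smallf n) = ∑ n ∈ Finset.range c, ((n:ℝ)+1) * (L (n+1):ℝ) := by
      rw [hRdef, ← Finset.sum_filter]
      congr 1
      ext x
      simp only [Finset.mem_filter, Finset.mem_range]
      omega
    have e2 : (∑ m ∈ Finset.Ico 1 (c+1), (m:ℝ) * (L m : ℝ))
        = ∑ i ∈ Finset.range c, ((1+i:ℕ):ℝ) * (L (1+i):ℝ) := by
      rw [Finset.sum_Ico_eq_sum_range]
      simp
    rw [e1, e2]
    refine Finset.sum_congr rfl fun i _ => ?_
    have harg : 1 + i = i + 1 := by omega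
    rw [harg]
    push_cast
    ring
  -- the key pointwise bound and summation
  have hkey : ∀ m ∈ R, ∀ n ∈ R,
      p * bigf m * smallf n + p * bigf n * smallf m ≤ genTerm q p (c+1+1) L m n := by
    intro m _ n _
    rcases le_or_gt c m with hm | hm <;> rcases lt_or_ge n c with hn | hn
    · -- big m, small n
      have h1 : bigf n = 0 := by simp [hbigf, Nat.not_le.mpr hn]
      have h2 : bigf m = ((m:ℝ)+1)^(p+q-1) * (L (m+1):ℝ) := by simp [hbigf, hm]
      have h3 : smallf n = ((n:ℝ)+1) * (L (n+1):ℝ) := by simp [hsmallf, hn]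
      rw [h1, h2, h3]
      have := genTerm_key (q := q) hp L hm hn
      linarith
    · -- both big
      have h1 : smallf n = 0 := by simp [hsmallf, Nat.not_lt.mpr hn]
      have h2 : smallf m = 0 := by simp [hsmallf, Nat.not_lt.mpr hm]
      rw [h1, h2]
      simpa using genTerm_nonneg (q := q) hp1 (c+1+1) L m n
    · -- both small
      have h1 : bigf m = 0 := by simp [hbigf, Nat.not_le.mpr hm]
      have h2 : bigf n = 0 := by simp [hbigf, Nat.not_le.mpr hn]
      rw [h1, h2]
      simpa using genTerm_nonneg (q := q) hp1 (c+1+1) L m n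
    · -- big n, small m
      have h1 : bigf m = 0 := by simp [hbigf, hm]
      have h2 : bigf n = ((n:ℝ)+1)^(p+q-1) * (L (n+1):ℝ) := by simp [hbigf, hn]
      have h3 : smallf m = ((m:ℝ)+1) * (L (m+1):ℝ) := by simp [hsmallf, hm]
      rw [h1, h2, h3]
      have hne : n ≠ m := by omega
      have := genTerm_key (q := q) hp L hn hm
      rw [genTerm_symm q p (c+1+1) L hne]
      linarith
  have hsum : 2 * (p * (∑ m ∈ R, bigf m) * (∑ n ∈ R, smallf n))
      ≤ ∑ m ∈ R, ∑ n ∈ R, genTerm q p (c+1+1) L m n := by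
    have h1 : (∑ m ∈ R, ∑ n ∈ R, (p * bigf m * smallf n + p * bigf n * smallf m))
        ≤ ∑ m ∈ R, ∑ n ∈ R, genTerm q p (c+1+1) L m n :=
      Finset.sum_le_sum fun m hm => Finset.sum_le_sum fun n hn => hkey m hm n hn
    have h2 : (∑ m ∈ R, ∑ n ∈ R, (p * bigf m * smallf n + p * bigf n * smallf m))
        = 2 * (p * (∑ m ∈ R, bigf m) * (∑ n ∈ R, smallf n)) := by
      have hfact : ∀ F G : ℕ → ℝ, (∑ m ∈ R, ∑ n ∈ R, F m * G n)
          = (∑ m ∈ R, F m) * (∑ n ∈ R, G n) := by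
        intro F G
        rw [Finset.sum_mul_sum]
      calc (∑ m ∈ R, ∑ n ∈ R, (p * bigf m * smallf n + p * bigf n * smallf m))
          = (∑ m ∈ R, ∑ n ∈ R, (p * bigf m) * smallf n)
            + ∑ m ∈ R, ∑ n ∈ R, smallf m * (p * bigf n) := by
            rw [← Finset.sum_add_distrib]
            refine Finset.sum_congr rfl fun m _ => ?_
            rw [← Finset.sum_add_distrib]
            exact Finset.sum_congr rfl fun n _ => by ring
        _ = (∑ m ∈ R, p * bigf m) * (∑ n ∈ R, smallf n)
            + (∑ m ∈ R, smallf m) * (∑ n ∈ R, p * bigf n) := by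
            rw [hfact (fun m => p * bigf m) smallf, hfact smallf (fun n => p * bigf n)]
        _ = 2 * (p * (∑ m ∈ R, bigf m) * (∑ n ∈ R, smallf n)) := by
            rw [← Finset.mul_sum]
            ring
    linarith
  -- put everything together
  rw [hD, hA, hreidx1, ← hreidx2]
  calc p * ((totalMass L)⁻¹ * ∑ m ∈ R, bigf m) * ((totalMass L)⁻¹ * ∑ n ∈ R, smallf n)
      = (1 / (2 * totalMass L ^ 2)) * (2 * (p * (∑ m ∈ R, bigf m) * (∑ n ∈ R, smallf n))) := by
        field_simp
    _ ≤ (1 / (2 * totalMass L ^ 2)) * (∑ m ∈ R, ∑ n ∈ R, genTerm q p (c+1+1) L m n) :=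
        mul_le_mul_of_nonneg_left hsum (by positivity)
end
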